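/- The class {ℕ} ⊆ P(ℕ) (the singleton consisting of the full set ℕ) is K-semidecidable relative to ∅″, but is not Type-2-semidecidable relative to any oracle. -/

import Mathlib

/-- The standard enumeration of partial computable functions. -/
noncomputable def phi (e : ℕ) : ℕ →. ℕ := (Denumerable.ofNat Nat.Partrec.Code e).eval

/-- The e-th computably enumerable set. -/
def W (e : ℕ) : Set ℕ := (phi e).Dom

/-- The halting set `∅′`. -/
def halts : Set ℕ := {e | (phi e e).Dom}

/-- Characteristic function of a set of naturals. -/
noncomputable def chi (S : Set ℕ) : ℕ → Bool :=
  fun n => @decide (n ∈ S) (Classical.propDecidable _)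

/-- The finite prefix of length `m` of the oracle `f`. -/
def pref (f : ℕ → ℕ) (m : ℕ) : List ℕ := (List.range m).map f

/-- The finite prefix of length `m` of a boolean oracle. -/
def prefB (f : ℕ → Bool) (m : ℕ) : List Bool := (List.range m).map f

/-- The admissible numbering of Sierpiński space `𝕊 = {⊥,⊤}` (with `⊥ = false`, `⊤ = true`):
`ν_𝕊(e) = ⊤` iff `φ_e(e)↓`. -/
noncomputable def nuS (e : ℕ) : Bool := @decide ((phi e e).Dom) (Classical.propDecidable _)

/-- `f` is a Type-2 name of the point `s ∈ 𝕊`: `s = ⊤` iff `f` eventually shows a nonzero. -/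
def SierpName (f : ℕ → ℕ) (s : Bool) : Prop := (s = true ↔ ∃ n, f n ≠ 0)

/-- `f` is a Type-2 name (enumeration) of the set `S ⊆ ℕ` (0 is padding, `n+1` codes `n`). -/
def EnumName (f : ℕ → ℕ) (S : Set ℕ) : Prop := S = {n | ∃ m, f m = n + 1}

/-- Kolmogorov complexity of a c.e. set: least binary length of an index. -/
noncomputable def KW (E : Set ℕ) : ℕ := sInf (Nat.size '' {e | W e = E})

/-- A canonical `Π⁰₂`-complete set, Turing-equivalent to `∅″`. -/
def zeroJJ : Set ℕ := {e | W e = Set.univ}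

section Aux

open Nat.Partrec (Code)
open Nat.Partrec.Code

lemma chi_eq_true {S : Set ℕ} {n : ℕ} : chi S n = true ↔ n ∈ S := by
  unfold chi
  constructor
  · exact fun h => @of_decide_eq_true _ (Classical.propDecidable _) h
  · exact fun h => @decide_eq_true _ (Classical.propDecidable _) h

lemma phi_encode (c : Code) : phi (Encodable.encode c) = c.eval := by
  simp [phi]

lemma ofOption_dom (o : Option ℕ) : (o : Part ℕ).Dom ↔ o.isSome := by
  cases o <;> simp [Part.ofOption]

lemma getD_append_true {l l' : List Bool} {n : ℕ} (h : l.getD n false = true) :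
    (l ++ l').getD n false = true := by
  rcases lt_or_ge n l.length with h'|h'
  · rwa [List.getD_append _ _ _ _ h']
  · rw [List.getD_eq_default _ _ h'] at h; exact absurd h (by simp)

lemma prefB_getD (g : ℕ → Bool) (m e : ℕ) :
    (prefB g m).getD e false = if e < m then g e else false := by
  rcases lt_or_ge e m with h|h
  · rw [List.getD_eq_getElem _ _ (by simpa [prefB] using h)]
    simp [prefB, h]
  · rw [List.getD_eq_default _ _ (by simpa [prefB] using h)]
    simp [Nat.not_lt_of_ge h]

lemma prefB_getD_true {g : ℕ → Bool} {m e : ℕ}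
    (h : (prefB g m).getD e false = true) : g e = true := by
  rw [prefB_getD] at h
  split at h
  · exact h
  · exact absurd h (by simp)

lemma prefB_length (g : ℕ → Bool) (m : ℕ) : (prefB g m).length = m := by simp [prefB]

lemma mem_pref {f : ℕ → ℕ} {m x : ℕ} : x ∈ pref f m ↔ ∃ j < m, f j = x := by
  simp [pref]

lemma foldr_all {β : Type*} (p : β → Bool) (l : List β) :
    l.foldr (fun b s => p b && s) true = l.all p := by
  induction l with
  | nil => rfl
  | cons a l ih => simp [ih]

lemma foldr_any {β : Type*} (p : β → Bool) (l : List β) :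
    l.foldr (fun b s => p b || s) false = l.any p := by
  induction l with
  | nil => rfl
  | cons a l ih => simp [ih]

lemma primrec_list_all {α β : Type*} [Primcodable α] [Primcodable β]
    {L : α → List β} {p : α → β → Bool} (hL : Primrec L) (hp : Primrec₂ p) :
    Primrec fun a => (L a).all (p a) := by
  have h : Primrec fun a => (L a).foldr (fun b s => p a b && s) true := by
    refine Primrec.list_foldr (h := fun a q => p a q.1 && q.2) hL (Primrec.const true) ?_
    have hb : Primrec fun q : α × β × Bool => p q.1 q.2.1 :=
      hp.comp Primrec.fst (Primrec.fst.comp Primrec.snd)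
    exact (Primrec.cond hb (Primrec.snd.comp Primrec.snd)
      (Primrec.const false)).to₂.of_eq fun a q => by
        cases hp : p a q.1 <;> simp [hp]
  exact h.of_eq fun a => foldr_all _ _

lemma primrec_list_any {α β : Type*} [Primcodable α] [Primcodable β]
    {L : α → List β} {p : α → β → Bool} (hL : Primrec L) (hp : Primrec₂ p) :
    Primrec fun a => (L a).any (p a) := by
  have h : Primrec fun a => (L a).foldr (fun b s => p a b || s) false := by
    refine Primrec.list_foldr (h := fun a q => p a q.1 || q.2) hL (Primrec.const false) ?_
    have hb : Primrec fun q : α × β × Bool => p q.1 q.2.1 :=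
      hp.comp Primrec.fst (Primrec.fst.comp Primrec.snd)
    exact (Primrec.cond hb (Primrec.const true)
      (Primrec.snd.comp Primrec.snd)).to₂.of_eq fun a q => by
        cases hp : p a q.1 <;> simp [hp]
  exact h.of_eq fun a => foldr_any _ _

lemma primrec_pow2 : Primrec fun k : ℕ => 2 ^ k := by
  have h : Primrec₂ fun (_ : ℕ) (ih : ℕ) => 2 * ih :=
    (Primrec.nat_mul.comp (Primrec.const 2) Primrec.snd).to₂
  have := Primrec.nat_rec₁ (f := fun _ ih => 2 * ih) 1 h
  refine this.of_eq fun k => ?_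
  induction k with
  | zero => rfl
  | succ n ih =>
      have h2 : (Nat.rec 1 (fun _ ih => 2 * ih) (n + 1) : ℕ) =
          2 * Nat.rec 1 (fun _ ih => 2 * ih) n := rfl
      rw [h2, ih, pow_succ, Nat.mul_comm]

/-- The option-valued step function: on input `⟨⟨e, n⟩, x⟩`, halt (with output 0) iff
`φ_e(n)` has not halted within `x` steps. -/
def Fopt : ℕ → Option ℕ := fun q =>
  cond ((evaln (Nat.unpair q).2
      (Denumerable.ofNat Code (Nat.unpair (Nat.unpair q).1).1)
      (Nat.unpair (Nat.unpair q).1).2).isSome)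
    none (some 0)

lemma Fopt_prim : Primrec Fopt := by
  have h1 : Primrec fun q : ℕ => (Nat.unpair q).2 := Primrec.snd.comp Primrec.unpair
  have h0 : Primrec fun q : ℕ => (Nat.unpair q).1 := Primrec.fst.comp Primrec.unpair
  have h2 : Primrec fun q : ℕ => (Nat.unpair (Nat.unpair q).1).1 :=
    Primrec.fst.comp (Primrec.unpair.comp h0)
  have h3 : Primrec fun q : ℕ => (Nat.unpair (Nat.unpair q).1).2 :=
    Primrec.snd.comp (Primrec.unpair.comp h0)
  have he : Primrec fun q : ℕ => evaln (Nat.unpair q).2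
      (Denumerable.ofNat Code (Nat.unpair (Nat.unpair q).1).1)
      (Nat.unpair (Nat.unpair q).1).2 :=
    primrec_evaln.comp ((h1.pair ((Primrec.ofNat Code).comp h2)).pair h3)
  exact Primrec.cond (Primrec.option_isSome.comp he) (Primrec.const none)
    (Primrec.const (some 0))

lemma FP : Nat.Partrec fun q => (Fopt q : Part ℕ) :=
  Partrec.nat_iff.1 (Computable.ofOption Fopt_prim.to_comp)

/-- A code for `Fopt`. -/
noncomputable def cF : Code := (exists_code.1 FP).choose

lemma cF_eval : cF.eval = fun q => (Fopt q : Part ℕ) := (exists_code.1 FP).choose_spec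

/-- `gg e n` is an index with `W (gg e n) = ℕ` iff `n ∉ W e`. -/
noncomputable def gg (e n : ℕ) : ℕ := Encodable.encode (cF.curry (Nat.pair e n))

lemma gg_prim : Primrec₂ gg :=
  (Primrec.encode.comp (primrec₂_curry.comp (Primrec.const cF) Primrec₂.natPair)).to₂

lemma mem_W_iff {e n : ℕ} :
    n ∈ W e ↔ ∃ s, (evaln s (Denumerable.ofNat Code e) n).isSome := by
  have : n ∈ W e ↔ ∃ x, x ∈ (Denumerable.ofNat Code e).eval n := by
    simp [W, phi, PFun.Dom, Part.dom_iff_mem]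
  rw [this]
  constructor
  · rintro ⟨x, hx⟩
    obtain ⟨s, hs⟩ := evaln_complete.1 hx
    exact ⟨s, Option.isSome_iff_exists.2 ⟨x, hs⟩⟩
  · rintro ⟨s, hs⟩
    obtain ⟨x, hx⟩ := Option.isSome_iff_exists.1 hs
    exact ⟨x, evaln_complete.2 ⟨s, hx⟩⟩

lemma gg_mem {e n : ℕ} : gg e n ∈ zeroJJ ↔ n ∉ W e := by
  have hW : W (gg e n) = {x | ¬ (evaln x (Denumerable.ofNat Code e) n).isSome} := by
    ext x
    show (phi (gg e n) x).Dom ↔ _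
    rw [gg, phi_encode]
    rw [show (cF.curry (Nat.pair e n)).eval x = cF.eval (Nat.pair (Nat.pair e n) x) from
      eval_curry _ _ _]
    rw [cF_eval]
    simp only [Fopt, Nat.unpair_pair]
    rw [ofOption_dom]
    rcases hb : evaln x (Denumerable.ofNat Code e) n with _ | y <;> simp [hb]
  have : gg e n ∈ zeroJJ ↔ W (gg e n) = Set.univ := Iff.rfl
  rw [this, hW, mem_W_iff]
  constructor
  · intro h hs
    obtain ⟨s, hsome⟩ := hs
    have : s ∈ {x | ¬ (evaln x (Denumerable.ofNat Code e) n).isSome} := h ▸ Set.mem_univ s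
    exact this hsome
  · intro h
    apply Set.eq_univ_of_forall
    intro x hx
    exact h ⟨x, hx⟩

/-- The semidecision procedure. -/
noncomputable def Mb (k : ℕ) (l₁ : List Bool) (l₂ : List ℕ) : Bool :=
  (List.range (2 ^ k)).all fun e =>
    l₁.getD e false || (List.range l₁.length).any fun n =>
      l₁.getD (gg e n) false && l₂.any fun x => decide (x = n + 1)

noncomputable def MM (k : ℕ) (l₁ : List Bool) (l₂ : List ℕ) : Option Unit :=
  cond (Mb k l₁ l₂) (some ()) none

lemma Mb_prim : Primrec fun p : ℕ × List Bool × List ℕ => Mb p.1 p.2.1 p.2.2 := by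
  have hl₁ : Primrec fun p : ℕ × List Bool × List ℕ => p.2.1 :=
    Primrec.fst.comp Primrec.snd
  have hl₂ : Primrec fun p : ℕ × List Bool × List ℕ => p.2.2 :=
    Primrec.snd.comp Primrec.snd
  -- innermost any : over l₂
  have h3 : Primrec fun r : ((ℕ × List Bool × List ℕ) × ℕ) × ℕ =>
      r.1.1.2.2.any fun x => decide (x = r.2 + 1) := by
    refine primrec_list_any (hl₂.comp (Primrec.fst.comp Primrec.fst)) ?_
    exact (Primrec.eq.comp Primrec.snd
      (Primrec.succ.comp (Primrec.snd.comp Primrec.fst))).decide.to₂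
  -- getD at gg
  have hgd : Primrec fun r : ((ℕ × List Bool × List ℕ) × ℕ) × ℕ =>
      r.1.1.2.1.getD (gg r.1.2 r.2) false :=
    (Primrec.list_getD false).comp (hl₁.comp (Primrec.fst.comp Primrec.fst))
      (gg_prim.comp (Primrec.snd.comp Primrec.fst) Primrec.snd)
  -- conjunction
  have h2 : Primrec fun r : ((ℕ × List Bool × List ℕ) × ℕ) × ℕ =>
      r.1.1.2.1.getD (gg r.1.2 r.2) false &&
        (r.1.1.2.2.any fun x => decide (x = r.2 + 1)) := by
    refine (Primrec.cond hgd h3 (Primrec.const false)).of_eq fun r => ?_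
    cases hb : r.1.1.2.1.getD (gg r.1.2 r.2) false <;> simp [hb]
  -- middle any : over range l₁.length
  have h2any : Primrec fun q : (ℕ × List Bool × List ℕ) × ℕ =>
      (List.range q.1.2.1.length).any fun n =>
        q.1.2.1.getD (gg q.2 n) false && q.1.2.2.any fun x => decide (x = n + 1) :=
    primrec_list_any
      (Primrec.list_range.comp (Primrec.list_length.comp (hl₁.comp Primrec.fst)))
      h2.to₂
  -- disjunction
  have hgd1 : Primrec fun q : (ℕ × List Bool × List ℕ) × ℕ =>
      q.1.2.1.getD q.2 false :=
    (Primrec.list_getD false).comp (hl₁.comp Primrec.fst) Primrec.snd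
  have h1 : Primrec fun q : (ℕ × List Bool × List ℕ) × ℕ =>
      q.1.2.1.getD q.2 false || (List.range q.1.2.1.length).any fun n =>
        q.1.2.1.getD (gg q.2 n) false && q.1.2.2.any fun x => decide (x = n + 1) := by
    refine (Primrec.cond hgd1 (Primrec.const true) h2any).of_eq fun q => ?_
    cases hb : q.1.2.1.getD q.2 false <;> simp [hb]
  exact primrec_list_all
    (Primrec.list_range.comp (primrec_pow2.comp Primrec.fst)) h1.to₂

lemma MM_comp : Computable fun p : ℕ × List Bool × List ℕ => MM p.1 p.2.1 p.2.2 :=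
  (Primrec.cond Mb_prim (Primrec.const (some ())) (Primrec.const none)).to_comp

lemma Mb_mono {k : ℕ} {l₁ l₁' : List Bool} {l₂ l₂' : List ℕ}
    (h : Mb k l₁ l₂ = true) : Mb k (l₁ ++ l₁') (l₂ ++ l₂') = true := by
  rw [Mb, List.all_eq_true] at h ⊢
  intro e he
  have h := h e he
  rw [Bool.or_eq_true] at h ⊢
  rcases h with h | h
  · exact Or.inl (getD_append_true h)
  · right
    rw [List.any_eq_true] at h ⊢
    obtain ⟨n, hn, hcond⟩ := h
    rw [List.mem_range] at hn
    refine ⟨n, List.mem_range.2 (lt_of_lt_of_le hn (by simp)), ?_⟩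
    rw [Bool.and_eq_true] at hcond ⊢
    refine ⟨getD_append_true hcond.1, ?_⟩
    rw [List.any_eq_true] at hcond ⊢
    obtain ⟨x, hx, hxe⟩ := hcond.2
    exact ⟨x, List.mem_append_left _ hx, hxe⟩

lemma MM_mono (k : ℕ) (l₁ : List Bool) (l₂ : List ℕ) (l₁' : List Bool) (l₂' : List ℕ)
    (v : Unit) (h : MM k l₁ l₂ = some v) : MM k (l₁ ++ l₁') (l₂ ++ l₂') = some v := by
  unfold MM at h ⊢
  cases hb : Mb k l₁ l₂ with
  | false => rw [hb] at h; exact absurd h (by simp)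
  | true => rw [hb] at h; rw [Mb_mono hb]; exact h

lemma main_iff {E : Set ℕ} (hE : ∃ e, W e = E) {k : ℕ} (hk : KW E ≤ k)
    {f : ℕ → ℕ} (hf : EnumName f E) :
    E = Set.univ ↔ ∃ m, MM k (prefB (chi zeroJJ) m) (pref f m) = some () := by
  have hMMb : ∀ m, MM k (prefB (chi zeroJJ) m) (pref f m) = some () ↔
      Mb k (prefB (chi zeroJJ) m) (pref f m) = true := by
    intro m
    unfold MM
    cases hb : Mb k (prefB (chi zeroJJ) m) (pref f m) <;> simp
  -- an index of minimal size
  have hne : (Nat.size '' {e | W e = E}).Nonempty := by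
    obtain ⟨e, he⟩ := hE
    exact ⟨Nat.size e, ⟨e, he, rfl⟩⟩
  obtain ⟨e₀, he₀, hsize⟩ := Nat.sInf_mem hne
  have he₀lt : e₀ < 2 ^ k := Nat.size_le.1 (hsize ▸ hk)
  constructor
  · intro hEuniv
    have claim : ∀ e, ∃ me, ∀ m, me ≤ m →
        ((prefB (chi zeroJJ) m).getD e false = true ∨
         ∃ n < m, (prefB (chi zeroJJ) m).getD (gg e n) false = true ∧
           (n + 1) ∈ pref f m) := by
      intro e
      by_cases hWe : W e = Set.univ
      · refine ⟨e + 1, fun m hm => Or.inl ?_⟩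
        rw [prefB_getD, if_pos (by omega)]
        exact chi_eq_true.2 hWe
      · obtain ⟨n, hn⟩ : ∃ n, n ∉ W e := by
          by_contra h
          push_neg at h
          exact hWe (Set.eq_univ_of_forall h)
        have hgz : gg e n ∈ zeroJJ := gg_mem.2 hn
        have hnE : n ∈ E := hEuniv ▸ Set.mem_univ n
        obtain ⟨j, hj⟩ : ∃ j, f j = n + 1 := by
          rw [hf] at hnE
          exact hnE
        refine ⟨max (gg e n + 1) (max (j + 1) (n + 1)), fun m hm => Or.inr ⟨n, by omega, ?_, ?_⟩⟩
        · rw [prefB_getD, if_pos (by omega)]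
          exact chi_eq_true.2 hgz
        · exact mem_pref.2 ⟨j, by omega, hj⟩
    choose me hme using claim
    refine ⟨(Finset.range (2 ^ k)).sup me, (hMMb _).2 ?_⟩
    set m := (Finset.range (2 ^ k)).sup me with hmdef
    rw [Mb, List.all_eq_true]
    intro e he
    rw [List.mem_range] at he
    have h := hme e m (Finset.le_sup (Finset.mem_range.2 he))
    rw [Bool.or_eq_true]
    rcases h with h | ⟨n, hn, hgd, hmem⟩
    · exact Or.inl h
    · right
      rw [List.any_eq_true]
      refine ⟨n, List.mem_range.2 (by rw [prefB_length]; exact hn), ?_⟩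
      rw [Bool.and_eq_true]
      refine ⟨hgd, ?_⟩
      rw [List.any_eq_true]
      exact ⟨n + 1, hmem, by simp⟩
  · rintro ⟨m, hm⟩
    rw [hMMb, Mb, List.all_eq_true] at hm
    have h := hm e₀ (List.mem_range.2 he₀lt)
    rw [Bool.or_eq_true] at h
    rcases h with h | h
    · have : e₀ ∈ zeroJJ := chi_eq_true.1 (prefB_getD_true h)
      rw [← he₀]
      exact this
    · exfalso
      rw [List.any_eq_true] at h
      obtain ⟨n, _, hcond⟩ := h
      rw [Bool.and_eq_true] at hcond
      have hnotin : n ∉ W e₀ := gg_mem.1 (chi_eq_true.1 (prefB_getD_true hcond.1))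
      rw [List.any_eq_true] at hcond
      obtain ⟨x, hx, hxe⟩ := hcond.2
      rw [decide_eq_true_eq] at hxe
      subst hxe
      obtain ⟨j, _, hj⟩ := mem_pref.1 hx
      have : n ∈ E := by
        rw [hf]
        exact ⟨j, hj⟩
      rw [he₀] at hnotin
      exact hnotin this

lemma W_univ_exists : ∃ e, W e = Set.univ := by
  refine ⟨Encodable.encode (Code.zero), Set.eq_univ_of_forall fun x => ?_⟩
  show (phi (Encodable.encode Code.zero) x).Dom
  rw [phi_encode]
  simp [Nat.Partrec.Code.eval]
  trivial

lemma W_lt_exists (m : ℕ) : ∃ e, W e = {n | n < m} := by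
  have hP : Primrec fun n => if n < m then some 0 else (none : Option ℕ) :=
    Primrec.ite (Primrec.nat_lt.comp Primrec.id (Primrec.const m))
      (Primrec.const (some 0)) (Primrec.const none)
  have hpart : Nat.Partrec fun n =>
      ((if n < m then some 0 else none : Option ℕ) : Part ℕ) :=
    Partrec.nat_iff.1 (Computable.ofOption hP.to_comp)
  obtain ⟨c, hc⟩ := exists_code.1 hpart
  refine ⟨Encodable.encode c, ?_⟩
  ext x
  show (phi (Encodable.encode c) x).Dom ↔ x < m
  rw [phi_encode, hc, ofOption_dom]
  split <;> simp_all

end Aux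

/-- The class `{ℕ} ⊆ P(ℕ)` is K-semidecidable relative to `∅″` (an oracle machine with
oracle `∅″`, given a bound `k ≥ K(E)` and an enumeration of `E`, halts iff `E = ℕ`),
but it is not Type-2-semidecidable relative to any oracle (no monotone — not even
computable — functional on enumerations semidecides it). -/
theorem stmt13 :
    (∃ M : ℕ → List Bool → List ℕ → Option Unit,
      Computable (fun p : ℕ × List Bool × List ℕ => M p.1 p.2.1 p.2.2) ∧
      (∀ k l₁ l₂ l₁' l₂' v, M k l₁ l₂ = some v → M k (l₁ ++ l₁') (l₂ ++ l₂') = some v) ∧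
      ∀ E : Set ℕ, (∃ e, W e = E) → ∀ k, KW E ≤ k → ∀ f : ℕ → ℕ, EnumName f E →
        (E = Set.univ ↔ ∃ m, M k (prefB (chi zeroJJ) m) (pref f m) = some ())) ∧
    (¬ ∃ M : List ℕ → Option Unit,
      (∀ l l' v, M l = some v → M (l ++ l') = some v) ∧
      ∀ E : Set ℕ, (∃ e, W e = E) → ∀ f : ℕ → ℕ, EnumName f E →
        (E = Set.univ ↔ ∃ m, M (pref f m) = some ())) := by
  constructor
  · exact ⟨MM, MM_comp, MM_mono, fun E hE k hk f hf => main_iff hE hk hf⟩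
  · rintro ⟨M, _, hM⟩
    have hname : EnumName (fun n => n + 1) Set.univ := by
      unfold EnumName
      ext n
      simp only [Set.mem_univ, Set.mem_setOf_eq, true_iff]
      exact ⟨n, rfl⟩
    obtain ⟨m, hm⟩ := (hM Set.univ W_univ_exists (fun n => n + 1) hname).1 rfl
    set f' : ℕ → ℕ := fun j => if j < m then j + 1 else 0 with hf'def
    have hE' : EnumName f' {n | n < m} := by
      unfold EnumName
      ext n
      simp only [Set.mem_setOf_eq]
      constructor
      · intro h
        exact ⟨n, show (if n < m then n + 1 else 0) = n + 1 from by rw [if_pos h]⟩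
      · rintro ⟨j, hj⟩
        have hj' : (if j < m then j + 1 else 0) = n + 1 := hj
        by_cases hjm : j < m
        · rw [if_pos hjm] at hj'
          omega
        · rw [if_neg hjm] at hj'
          omega
    have h2 := hM {n | n < m} (W_lt_exists m) f' hE'
    have hpref : pref f' m = pref (fun n => n + 1) m := by
      unfold pref
      apply List.map_congr_left
      intro j hj
      rw [List.mem_range] at hj
      show (if j < m then j + 1 else 0) = j + 1
      rw [if_pos hj]
    have huniv : {n | n < m} = Set.univ := h2.2 ⟨m, by rw [hpref]; exact hm⟩
    have : m ∈ {n | n < m} := huniv ▸ Set.mem_univ m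
    exact absurd this (by simp)
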